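/- Let A, B be Hermitian d×d matrices and let Eig↓(M) denote the vector of eigenvalues of M sorted in non-increasing order, Eig↑(M) sorted in non-decreasing order. Then ‖Diag(Eig↓(A)) − Diag(Eig↓(B))‖₁ ≤ ‖A − B‖₁ ≤ ‖Diag(Eig↓(A)) − Diag(Eig↑(B))‖₁. -/

import Mathlib

/-- The trace norm of a Hermitian matrix: the sum of the absolute values of its
eigenvalues (which are its singular values). -/
noncomputable def traceNormH {d : ℕ} {A : Matrix (Fin d) (Fin d) ℂ}
    (hA : A.IsHermitian) : ℝ := ∑ i, |hA.eigenvalues i|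

open Matrix Finset Complex
open scoped ComplexOrder


/-- Scalar Ky Fan lemma. -/
lemma kyfan_scalar {d k : ℕ} (hk : k ≤ d) (α c : Fin d → ℝ) (hα : Antitone α)
    (hc0 : ∀ i, 0 ≤ c i) (hc1 : ∀ i, c i ≤ 1) (hsum : ∑ i, c i = k) :
    ∑ i, α i * c i ≤ ∑ i, if i.val < k then α i else 0 := by
  rcases Nat.eq_zero_or_pos k with rfl | hkpos
  · have h0 : ∀ i ∈ Finset.univ, c i = 0 :=
      (Finset.sum_eq_zero_iff_of_nonneg (fun i _ => hc0 i)).1 (by simpa using hsum)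
    have : ∑ i, α i * c i = 0 :=
      Finset.sum_eq_zero fun i hi => by rw [h0 i hi, mul_zero]
    simp [this]
  · have hk1 : k - 1 < d := by omega
    set t : ℝ := α ⟨k - 1, hk1⟩ with ht
    have key : ∀ i : Fin d, (α i - t) * c i ≤ (if i.val < k then α i - t else 0) := by
      intro i
      by_cases h : i.val < k
      · simp only [h, if_true]
        have hit : t ≤ α i := hα (by simp only [Fin.le_def, Fin.val_mk]; omega)
        calc (α i - t) * c i ≤ (α i - t) * 1 :=
              mul_le_mul_of_nonneg_left (hc1 i) (by linarith)
          _ = α i - t := mul_one _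
      · simp only [h, if_false]
        have hit : α i ≤ t := hα (by simp only [Fin.le_def, Fin.val_mk]; omega)
        exact mul_nonpos_of_nonpos_of_nonneg (by linarith) (hc0 i)
    have h1 : ∑ i, (α i - t) * c i ≤ ∑ i, (if i.val < k then α i - t else 0) :=
      Finset.sum_le_sum fun i _ => key i
    have hcard : (Finset.univ.filter (fun i : Fin d => i.val < k)).card = k := by
      have : (Finset.univ.filter (fun i : Fin d => i.val < k)) =
          Finset.Iic (⟨k - 1, hk1⟩ : Fin d) := by
        ext i
        simp only [Finset.mem_filter, Finset.mem_univ, true_and, Finset.mem_Iic]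
        rw [Fin.le_def]
        simp only [Fin.val_mk]
        omega
      rw [this, Fin.card_Iic]; simp only [Fin.val_mk]; omega
    have h2 : ∑ i, (if i.val < k then α i - t else 0)
        = (∑ i, if i.val < k then α i else 0) - k * t := by
      rw [← Finset.sum_filter, ← Finset.sum_filter, Finset.sum_sub_distrib,
        Finset.sum_const, hcard, nsmul_eq_mul]
    have h3 : ∑ i, (α i - t) * c i = ∑ i, α i * c i - t * k := by
      simp only [sub_mul, Finset.sum_sub_distrib, ← Finset.mul_sum, hsum]
    have : (k : ℝ) * t = t * k := mul_comm _ _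
    linarith


lemma row_normSq_of_unitary {d : ℕ} {W : Matrix (Fin d) (Fin d) ℂ}
    (hW : W ∈ Matrix.unitaryGroup (Fin d) ℂ) (i : Fin d) :
    ∑ j, Complex.normSq (W i j) = 1 := by
  have h : W * Wᴴ = 1 := by
    rw [← Matrix.star_eq_conjTranspose]
    exact (Matrix.mem_unitaryGroup_iff).mp hW
  have h2 := congrArg (fun M => M i i) h
  simp only [Matrix.mul_apply, Matrix.one_apply_eq, Matrix.conjTranspose_apply] at h2
  have : ∀ j, W i j * star (W i j) = (Complex.normSq (W i j) : ℂ) := fun j =>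
    Complex.mul_conj _
  rw [Finset.sum_congr rfl (fun j _ => this j)] at h2
  exact_mod_cast h2

lemma col_normSq_of_unitary {d : ℕ} {W : Matrix (Fin d) (Fin d) ℂ}
    (hW : W ∈ Matrix.unitaryGroup (Fin d) ℂ) (j : Fin d) :
    ∑ i, Complex.normSq (W i j) = 1 := by
  have h : Wᴴ * W = 1 := by
    rw [← Matrix.star_eq_conjTranspose]
    exact (Matrix.mem_unitaryGroup_iff').mp hW
  have h2 := congrArg (fun M => M j j) h
  simp only [Matrix.mul_apply, Matrix.one_apply_eq, Matrix.conjTranspose_apply] at h2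
  have : ∀ i, star (W i j) * W i j = (Complex.normSq (W i j) : ℂ) := fun i => by
    rw [mul_comm]; exact Complex.mul_conj _
  rw [Finset.sum_congr rfl (fun i _ => this i)] at h2
  exact_mod_cast h2

/-- Representation of `tr (X * U χ_T Uᴴ)` as `∑ νᵢ cᵢ` with `c` doubly-stochastic-type bounds. -/
lemma trace_proj_repr {d : ℕ} {X : Matrix (Fin d) (Fin d) ℂ} (hX : X.IsHermitian)
    (U : Matrix (Fin d) (Fin d) ℂ) (hU : U ∈ Matrix.unitaryGroup (Fin d) ℂ)
    (T : Finset (Fin d)) :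
    ∃ c : Fin d → ℝ, (∀ i, 0 ≤ c i) ∧ (∀ i, c i ≤ 1) ∧ (∑ i, c i = T.card) ∧
      (X * (U * Matrix.diagonal (fun j => if j ∈ T then (1:ℂ) else 0) * Uᴴ)).trace
        = ∑ i, (hX.eigenvalues i : ℂ) * ((c i : ℝ) : ℂ) := by
  classical
  set V : Matrix (Fin d) (Fin d) ℂ := (hX.eigenvectorUnitary : Matrix (Fin d) (Fin d) ℂ)
  set W : Matrix (Fin d) (Fin d) ℂ := Vᴴ * U with hWdef
  have hWu : W ∈ Matrix.unitaryGroup (Fin d) ℂ := by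
    rw [hWdef, ← Matrix.star_eq_conjTranspose]
    exact mul_mem (Unitary.star_mem hX.eigenvectorUnitary.2) hU
  set c : Fin d → ℝ := fun i => ∑ j ∈ T, Complex.normSq (W i j) with hc
  refine ⟨c, fun i => Finset.sum_nonneg fun j _ => Complex.normSq_nonneg _,
    fun i => ?_, ?_, ?_⟩
  · calc c i ≤ ∑ j, Complex.normSq (W i j) :=
        Finset.sum_le_sum_of_subset_of_nonneg (Finset.subset_univ T)
          (fun j _ _ => Complex.normSq_nonneg _)
    _ = 1 := row_normSq_of_unitary hWu i
  · rw [hc]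
    rw [Finset.sum_comm]
    rw [Finset.sum_congr rfl (fun j _ => col_normSq_of_unitary hWu j)]
    simp
  · have hVV : Vᴴ * V = 1 := by
      rw [← Matrix.star_eq_conjTranspose]
      exact (Matrix.mem_unitaryGroup_iff').mp hX.eigenvectorUnitary.2
    have hVV' : V * Vᴴ = 1 := by
      rw [← Matrix.star_eq_conjTranspose]
      exact (Matrix.mem_unitaryGroup_iff).mp hX.eigenvectorUnitary.2
    set χ : Matrix (Fin d) (Fin d) ℂ :=
      Matrix.diagonal (fun j => if j ∈ T then (1:ℂ) else 0) with hχ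
    set D : Matrix (Fin d) (Fin d) ℂ :=
      Matrix.diagonal (RCLike.ofReal ∘ hX.eigenvalues) with hD
    have hm : X * (U * χ * Uᴴ) = V * ((D * (W * χ * Wᴴ)) * Vᴴ) := by
      conv_lhs => rw [hX.spectral_theorem]
      rw [Unitary.conjStarAlgAut_apply, Matrix.star_eq_conjTranspose]
      simp only [hWdef, Matrix.conjTranspose_mul, Matrix.conjTranspose_conjTranspose,
        Matrix.mul_assoc]
      rw [hVV']
      simp only [Matrix.mul_one]
      rfl
    have htr : (X * (U * χ * Uᴴ)).trace = (D * (W * χ * Wᴴ)).trace := by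
      rw [hm, Matrix.trace_mul_comm, Matrix.mul_assoc, hVV, Matrix.mul_one]
    rw [htr]
    rw [Matrix.trace]
    have hdiag : ∀ i, (D * (W * χ * Wᴴ)).diag i
        = (hX.eigenvalues i : ℂ) * ∑ j ∈ T, (Complex.normSq (W i j) : ℂ) := by
      intro i
      rw [Matrix.diag_apply, Matrix.diagonal_mul]
      congr 1
      rw [Matrix.mul_apply]
      simp only [hχ, Matrix.mul_diagonal, Matrix.conjTranspose_apply, mul_ite, mul_one,
        mul_zero, ite_mul, zero_mul]
      rw [Finset.sum_ite_mem, Finset.univ_inter]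
      exact Finset.sum_congr rfl fun j _ => Complex.mul_conj _
    rw [Finset.sum_congr rfl (fun i _ => hdiag i)]
    simp only [hc]
    push_cast
    rfl


variable {d : ℕ}

/-- Coordinates of a vector in the span of part of an orthonormal basis vanish
outside that part. -/
lemma repr_zero_of_span {E : Type*} [NormedAddCommGroup E] [InnerProductSpace ℂ E]
    (b : OrthonormalBasis (Fin d) ℂ E) (S : Set (Fin d)) (v : E)
    (hv : v ∈ Submodule.span ℂ (⇑b '' S)) {j : Fin d} (hj : j ∉ S) :
    b.repr v j = 0 := by
  have hker : Submodule.span ℂ (⇑b '' S) ≤ LinearMap.ker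
      ((EuclideanSpace.projₗ j).comp (b.repr.toLinearEquiv : E →ₗ[ℂ] EuclideanSpace ℂ (Fin d))) := by
    rw [Submodule.span_le]
    rintro x ⟨i, hi, rfl⟩
    simp only [SetLike.mem_coe, LinearMap.mem_ker, LinearMap.comp_apply]
    have : b.repr (b i) = EuclideanSpace.single i (1:ℂ) := b.repr_self i
    simp only [LinearEquiv.coe_coe, LinearIsometryEquiv.coe_toLinearEquiv, this]
    have hij : j ≠ i := fun h => hj (h ▸ hi)
    simp [EuclideanSpace.projₗ, EuclideanSpace.single_apply, hij]
  exact (LinearMap.mem_ker).mp (hker hv)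

lemma quad_repr {X : Matrix (Fin d) (Fin d) ℂ} (hX : X.IsHermitian)
    (v : EuclideanSpace ℂ (Fin d)) :
    dotProduct (star (v : Fin d → ℂ)) (X *ᵥ v)
      = ((∑ j, hX.eigenvalues j * Complex.normSq (hX.eigenvectorBasis.repr v j) : ℝ) : ℂ) := by
  set b := hX.eigenvectorBasis with hb
  set r : Fin d → ℂ := fun j => b.repr v j with hr
  have hv : (v : Fin d → ℂ) = ∑ j, r j • ⇑(b j) := by
    have h := congrArg WithLp.ofLp (b.sum_repr v).symm
    rw [h, WithLp.ofLp_sum]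
    simp only [WithLp.ofLp_smul]
    rfl
  have hmul : X *ᵥ (v : Fin d → ℂ) = ∑ j, (r j * (hX.eigenvalues j : ℂ)) • ⇑(b j) := by
    conv_lhs => rw [hv]
    rw [← Matrix.mulVecLin_apply, map_sum]
    refine Finset.sum_congr rfl fun j _ => ?_
    rw [_root_.map_smul, Matrix.mulVecLin_apply, hX.mulVec_eigenvectorBasis]
    ext i
    simp only [Pi.smul_apply, smul_eq_mul, Complex.real_smul]
    ring
  have hdot : ∀ j, dotProduct (star (v : Fin d → ℂ)) ⇑(b j) = starRingEnd ℂ (r j) := by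
    intro j
    have h1 : dotProduct (star (v : Fin d → ℂ)) ⇑(b j) = inner (𝕜 := ℂ) v (b j) := by
      rw [EuclideanSpace.inner_eq_star_dotProduct, dotProduct_comm]
    rw [h1, ← inner_conj_symm, ← b.repr_apply_apply]
  calc dotProduct (star (v : Fin d → ℂ)) (X *ᵥ v)
      = ∑ j, (r j * (hX.eigenvalues j : ℂ)) *
          dotProduct (star (v : Fin d → ℂ)) ⇑(b j) := by
        rw [hmul]
        simp only [dotProduct, Finset.sum_apply, Pi.smul_apply, smul_eq_mul,
          Finset.mul_sum]
        rw [Finset.sum_comm]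
        refine Finset.sum_congr rfl fun j _ => Finset.sum_congr rfl fun i _ => ?_
        ring
    _ = ((∑ j, hX.eigenvalues j * Complex.normSq (r j) : ℝ) : ℂ) := by
        rw [Complex.ofReal_sum]
        refine Finset.sum_congr rfl fun j _ => ?_
        rw [hdot j, mul_comm (r j) _, mul_assoc, Complex.mul_conj]
        push_cast
        ring

lemma sum_normSq_repr (b : OrthonormalBasis (Fin d) ℂ (EuclideanSpace ℂ (Fin d)))
    (v : EuclideanSpace ℂ (Fin d)) :
    ∑ j, Complex.normSq (b.repr v j) = ‖v‖ ^ 2 := by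
  have h1 : ‖b.repr v‖ = ‖v‖ := b.repr.norm_map v
  have h2 : ‖b.repr v‖ ^ 2 = ∑ j, ‖b.repr v j‖ ^ 2 := by
    rw [EuclideanSpace.norm_eq, Real.sq_sqrt (Finset.sum_nonneg fun j _ => sq_nonneg _)]
  rw [← h1, h2]
  refine Finset.sum_congr rfl fun j _ => ?_
  rw [Complex.sq_norm]

/-- Weyl monotonicity: eigenvalues (sorted decreasingly) are monotone under psd perturbation. -/
lemma weyl_mono {X Y : Matrix (Fin d) (Fin d) ℂ} (hX : X.IsHermitian) (hY : Y.IsHermitian)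
    (hpsd : (Y - X).PosSemidef) {α γ : Fin d → ℝ} (hα : Antitone α) (hγ : Antitone γ)
    (eX : Equiv.Perm (Fin d)) (hXe : α = hX.eigenvalues ∘ eX)
    (eY : Equiv.Perm (Fin d)) (hYe : γ = hY.eigenvalues ∘ eY) (k : Fin d) :
    α k ≤ γ k := by
  classical
  set bX := hX.eigenvectorBasis
  set bY := hY.eigenvectorBasis
  set SX : Set (Fin d) := ↑((Finset.Iic k).image eX) with hSX
  set SY : Set (Fin d) := ↑((Finset.Ici k).image eY) with hSY
  set VX : Submodule ℂ (EuclideanSpace ℂ (Fin d)) := Submodule.span ℂ (⇑bX '' SX)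
  set VY : Submodule ℂ (EuclideanSpace ℂ (Fin d)) := Submodule.span ℂ (⇑bY '' SY)
  -- dimensions
  have hdim : ∀ (b : OrthonormalBasis (Fin d) ℂ (EuclideanSpace ℂ (Fin d)))
      (T : Finset (Fin d)) (e : Equiv.Perm (Fin d)),
      Module.finrank ℂ (Submodule.span ℂ (⇑b '' ↑(T.image e))) = T.card := by
    intro b T e
    have hrange : ⇑b '' ↑(T.image e) = Set.range (fun i : T => b (e i)) := by
      ext x
      simp only [Set.mem_image, Finset.coe_image, Set.mem_range]
      constructor
      · rintro ⟨j, ⟨i, hi, rfl⟩, rfl⟩; exact ⟨⟨i, hi⟩, rfl⟩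
      · rintro ⟨⟨i, hi⟩, rfl⟩; exact ⟨e i, ⟨i, hi, rfl⟩, rfl⟩
    have li : LinearIndependent ℂ (fun i : T => b (e i)) :=
      b.orthonormal.linearIndependent.comp (fun i : T => e i)
        (fun i j hij => Subtype.ext (e.injective hij))
    rw [hrange, finrank_span_eq_card li, Fintype.card_coe]
  have hdX : Module.finrank ℂ VX = k.val + 1 := by
    rw [hdim bX (Finset.Iic k) eX, Fin.card_Iic]
  have hdY : Module.finrank ℂ VY = d - k.val := by
    rw [hdim bY (Finset.Ici k) eY, Fin.card_Ici]
  -- intersection is nontrivial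
  have hsum := Submodule.finrank_sup_add_finrank_inf_eq VX VY
  have hle : Module.finrank ℂ ↥(VX ⊔ VY) ≤ d := by
    have := Submodule.finrank_le (VX ⊔ VY)
    simpa using this
  have hpos : VX ⊓ VY ≠ ⊥ := by
    intro hbot
    rw [hbot, hdX, hdY, finrank_bot] at hsum
    have hk := k.isLt
    omega
  obtain ⟨v, hv, hv0⟩ := Submodule.exists_mem_ne_zero_of_ne_bot hpos
  have hvX : v ∈ VX := hv.1
  have hvY : v ∈ VY := hv.2
  -- quadratic forms
  have hnv : (0:ℝ) < ‖v‖ ^ 2 := pow_pos (norm_pos_iff.mpr hv0) 2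
  have hXbound : α k * ‖v‖ ^ 2 ≤ ∑ j, hX.eigenvalues j * Complex.normSq (bX.repr v j) := by
    rw [← sum_normSq_repr bX v, Finset.mul_sum]
    refine Finset.sum_le_sum fun j _ => ?_
    by_cases hj : j ∈ SX
    · rw [hSX] at hj
      obtain ⟨i, hi, rfl⟩ := Finset.mem_image.mp (Finset.mem_coe.mp hj)
      have hαi : α i = hX.eigenvalues (eX i) := by rw [hXe]; rfl
      have h1 : α k ≤ hX.eigenvalues (eX i) := hαi ▸ hα (Finset.mem_Iic.mp hi)
      exact mul_le_mul_of_nonneg_right h1 (Complex.normSq_nonneg _)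
    · rw [repr_zero_of_span bX SX v hvX hj]
      simp
  have hYbound : ∑ j, hY.eigenvalues j * Complex.normSq (bY.repr v j) ≤ γ k * ‖v‖ ^ 2 := by
    rw [← sum_normSq_repr bY v, Finset.mul_sum]
    refine Finset.sum_le_sum fun j _ => ?_
    by_cases hj : j ∈ SY
    · rw [hSY] at hj
      obtain ⟨i, hi, rfl⟩ := Finset.mem_image.mp (Finset.mem_coe.mp hj)
      have hγi : γ i = hY.eigenvalues (eY i) := by rw [hYe]; rfl
      have h1 : hY.eigenvalues (eY i) ≤ γ k := hγi ▸ hγ (Finset.mem_Ici.mp hi)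
      exact mul_le_mul_of_nonneg_right h1 (Complex.normSq_nonneg _)
    · rw [repr_zero_of_span bY SY v hvY hj]
      simp
  -- psd comparison
  have hcmp : ∑ j, hX.eigenvalues j * Complex.normSq (bX.repr v j)
      ≤ ∑ j, hY.eigenvalues j * Complex.normSq (bY.repr v j) := by
    have h0 := hpsd.dotProduct_mulVec_nonneg (v : Fin d → ℂ)
    rw [Matrix.sub_mulVec, dotProduct_sub, quad_repr hX v, quad_repr hY v] at h0
    have := sub_nonneg.mp (by exact_mod_cast ((Complex.le_def).mp h0).1 : (0:ℝ) ≤ _)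
    · exact this
  have := (hXbound.trans hcmp).trans hYbound
  exact le_of_mul_le_mul_right this hnv


variable {d : ℕ}

lemma trace_unitary_conj (U : Matrix (Fin d) (Fin d) ℂ)
    (hU : U ∈ Matrix.unitaryGroup (Fin d) ℂ) (s : Fin d → ℂ) :
    (U * Matrix.diagonal s * Uᴴ).trace = ∑ i, s i := by
  have hUU : Uᴴ * U = 1 := by
    rw [← Matrix.star_eq_conjTranspose]
    exact (Matrix.mem_unitaryGroup_iff').mp hU
  rw [Matrix.trace_mul_cycle, hUU, Matrix.one_mul, Matrix.trace_diagonal]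

lemma trace_eq_sum_eigenvalues {X : Matrix (Fin d) (Fin d) ℂ} (hX : X.IsHermitian) :
    X.trace = ((∑ i, hX.eigenvalues i : ℝ) : ℂ) := by
  conv_lhs => rw [hX.spectral_theorem]
  rw [Unitary.conjStarAlgAut_apply, Matrix.star_eq_conjTranspose, trace_unitary_conj _ hX.eigenvectorUnitary.2]
  push_cast
  rfl

lemma trace_re_eq_sum_eigenvalues {X : Matrix (Fin d) (Fin d) ℂ} (hX : X.IsHermitian) :
    X.trace.re = ∑ i, hX.eigenvalues i := by
  rw [trace_eq_sum_eigenvalues hX, Complex.ofReal_re]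

/-- trace of `X * (U diag(s) Uᴴ)` when `U` is the eigenvector unitary of `X`. -/
lemma trace_mul_ownbasis_diag {X : Matrix (Fin d) (Fin d) ℂ} (hX : X.IsHermitian)
    (s : Fin d → ℂ) :
    (X * ((hX.eigenvectorUnitary : Matrix (Fin d) (Fin d) ℂ) * Matrix.diagonal s *
      (hX.eigenvectorUnitary : Matrix (Fin d) (Fin d) ℂ)ᴴ)).trace
      = ∑ i, (hX.eigenvalues i : ℂ) * s i := by
  set V : Matrix (Fin d) (Fin d) ℂ := (hX.eigenvectorUnitary : Matrix (Fin d) (Fin d) ℂ)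
  have hVV : Vᴴ * V = 1 := by
    rw [← Matrix.star_eq_conjTranspose]
    exact (Matrix.mem_unitaryGroup_iff').mp hX.eigenvectorUnitary.2
  have hm : X * (V * Matrix.diagonal s * Vᴴ)
      = V * Matrix.diagonal (fun i => (hX.eigenvalues i : ℂ) * s i) * Vᴴ := by
    conv_lhs => rw [hX.spectral_theorem]
    rw [Unitary.conjStarAlgAut_apply, Matrix.star_eq_conjTranspose]
    rw [show (V * Matrix.diagonal (RCLike.ofReal ∘ hX.eigenvalues) * Vᴴ) *
        (V * Matrix.diagonal s * Vᴴ)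
        = V * (Matrix.diagonal (RCLike.ofReal ∘ hX.eigenvalues) * ((Vᴴ * V) *
          (Matrix.diagonal s * Vᴴ))) by simp only [Matrix.mul_assoc]]
    rw [hVV, Matrix.one_mul, ← Matrix.mul_assoc (Matrix.diagonal (RCLike.ofReal ∘ hX.eigenvalues))
      (Matrix.diagonal s) Vᴴ, Matrix.diagonal_mul_diagonal, ← Matrix.mul_assoc]
    rfl
  rw [hm, trace_unitary_conj _ hX.eigenvectorUnitary.2]

lemma psd_unitary_conj_diag (U : Matrix (Fin d) (Fin d) ℂ)
    (hU : U ∈ Matrix.unitaryGroup (Fin d) ℂ) (s : Fin d → ℝ) (hs : ∀ i, 0 ≤ s i) :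
    (U * Matrix.diagonal (fun i => (s i : ℂ)) * Uᴴ).PosSemidef := by
  have hdiag : (Matrix.diagonal (fun i => (s i : ℂ))).PosSemidef :=
    Matrix.PosSemidef.diagonal (fun i => by
      simpa using Complex.zero_le_real.mpr (hs i))
  exact hdiag.mul_mul_conjTranspose_same U

lemma exists_antitone_perm (f : Fin d → ℝ) :
    ∃ (g : Fin d → ℝ) (e : Equiv.Perm (Fin d)), Antitone g ∧ g = f ∘ e := by
  refine ⟨f ∘ (Fin.revPerm.trans (Tuple.sort f)), Fin.revPerm.trans (Tuple.sort f), ?_, rfl⟩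
  intro x y hxy
  have hm := Tuple.monotone_sort f
  exact hm (Fin.rev_le_rev.mpr hxy)

section Upper
variable {d : ℕ}

lemma kyfan_upper {X : Matrix (Fin d) (Fin d) ℂ} (hX : X.IsHermitian)
    (U : Matrix (Fin d) (Fin d) ℂ) (hU : U ∈ Matrix.unitaryGroup (Fin d) ℂ)
    (T : Finset (Fin d)) {α : Fin d → ℝ} (hα : Antitone α)
    (e : Equiv.Perm (Fin d)) (he : α = hX.eigenvalues ∘ e) :
    (X * (U * Matrix.diagonal (fun j => if j ∈ T then (1:ℂ) else 0) * Uᴴ)).trace.re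
      ≤ ∑ i, if i.val < T.card then α i else 0 := by
  obtain ⟨c, hc0, hc1, hcsum, hctr⟩ := trace_proj_repr hX U hU T
  have hre : (X * (U * Matrix.diagonal (fun j => if j ∈ T then (1:ℂ) else 0) * Uᴴ)).trace.re
      = ∑ i, hX.eigenvalues i * c i := by
    have hcast : (∑ i, (hX.eigenvalues i : ℂ) * ((c i : ℝ) : ℂ))
        = ((∑ i, hX.eigenvalues i * c i : ℝ) : ℂ) := by push_cast; rfl
    rw [hctr, hcast, Complex.ofReal_re]
  rw [hre]
  have hrearr : ∑ i, hX.eigenvalues i * c i = ∑ i, α i * c (e i) := by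
    rw [← Equiv.sum_comp e (fun i => hX.eigenvalues i * c i), he]
    rfl
  rw [hrearr]
  have hk : T.card ≤ d := by
    have := Finset.card_le_univ T
    simpa using this
  exact kyfan_scalar hk α (fun i => c (e i)) hα (fun i => hc0 _) (fun i => hc1 _)
    (by rw [Equiv.sum_comp e c, hcsum])

lemma kyfan_lower {X : Matrix (Fin d) (Fin d) ℂ} (hX : X.IsHermitian)
    (U : Matrix (Fin d) (Fin d) ℂ) (hU : U ∈ Matrix.unitaryGroup (Fin d) ℂ)
    (T : Finset (Fin d)) {β' : Fin d → ℝ} (hβ' : Monotone β')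
    (e : Equiv.Perm (Fin d)) (he : β' = hX.eigenvalues ∘ e) :
    (∑ i, if i.val < T.card then β' i else 0)
      ≤ (X * (U * Matrix.diagonal (fun j => if j ∈ T then (1:ℂ) else 0) * Uᴴ)).trace.re := by
  obtain ⟨c, hc0, hc1, hcsum, hctr⟩ := trace_proj_repr hX U hU T
  have hre : (X * (U * Matrix.diagonal (fun j => if j ∈ T then (1:ℂ) else 0) * Uᴴ)).trace.re
      = ∑ i, hX.eigenvalues i * c i := by
    have hcast : (∑ i, (hX.eigenvalues i : ℂ) * ((c i : ℝ) : ℂ))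
        = ((∑ i, hX.eigenvalues i * c i : ℝ) : ℂ) := by push_cast; rfl
    rw [hctr, hcast, Complex.ofReal_re]
  rw [hre]
  have hk : T.card ≤ d := by
    have := Finset.card_le_univ T
    simpa using this
  have hneg : ∑ i, (fun i => -β' i) i * c (e i) ≤ ∑ i, if i.val < T.card then -β' i else 0 :=
    kyfan_scalar hk (fun i => -β' i) (fun i => c (e i)) (fun x y hxy => by
        simp only [neg_le_neg_iff]
        exact hβ' hxy)
      (fun i => hc0 _) (fun i => hc1 _) (by rw [Equiv.sum_comp e c, hcsum])
  have h1 : ∑ i, hX.eigenvalues i * c i = ∑ i, β' i * c (e i) := by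
    rw [← Equiv.sum_comp e (fun i => hX.eigenvalues i * c i), he]
    rfl
  have h2 : ∑ i : Fin d, (fun i => -β' i) i * c (e i) = -∑ i, β' i * c (e i) := by
    rw [← Finset.sum_neg_distrib]
    exact Finset.sum_congr rfl fun i _ => by ring
  have h3 : ∑ i : Fin d, (if i.val < T.card then -β' i else 0)
      = -∑ i, if i.val < T.card then β' i else 0 := by
    rw [← Finset.sum_neg_distrib]
    exact Finset.sum_congr rfl fun i _ => by by_cases h : i.val < T.card <;> simp [h]
  rw [h2, h3] at hneg
  rw [h1]
  linarith

end Upper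

lemma mirsky_upper {d : ℕ} {A B : Matrix (Fin d) (Fin d) ℂ}
    (hA : A.IsHermitian) (hB : B.IsHermitian) {α β' : Fin d → ℝ}
    (hα : Antitone α) (hβ' : Monotone β')
    (eA : Equiv.Perm (Fin d)) (heA : α = hA.eigenvalues ∘ eA)
    (eB : Equiv.Perm (Fin d)) (heB : β' = hB.eigenvalues ∘ eB) :
    traceNormH (hA.sub hB) ≤ ∑ i, |α i - β' i| := by
  classical
  set hD := hA.sub hB with hDdef
  set μ : Fin d → ℝ := hD.eigenvalues with hμ
  set U : Matrix (Fin d) (Fin d) ℂ := (hD.eigenvectorUnitary : Matrix (Fin d) (Fin d) ℂ)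
    with hUdef
  have hUmem : U ∈ Matrix.unitaryGroup (Fin d) ℂ := hD.eigenvectorUnitary.2
  set T : Finset (Fin d) := Finset.univ.filter (fun i => 0 ≤ μ i) with hT
  set k := T.card with hk
  set χ : Fin d → ℂ := fun j => if j ∈ T then (1:ℂ) else 0 with hχ
  set P : Matrix (Fin d) (Fin d) ℂ := U * Matrix.diagonal χ * Uᴴ with hP
  have hUU' : U * Uᴴ = 1 := by
    rw [← Matrix.star_eq_conjTranspose]
    exact (Matrix.mem_unitaryGroup_iff).mp hUmem
  have step1 : ((A - B) * (U * Matrix.diagonal (fun j => 2 * χ j - 1) * Uᴴ)).trace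
      = ((traceNormH hD : ℝ) : ℂ) := by
    rw [hUdef, trace_mul_ownbasis_diag hD, traceNormH]
    push_cast
    refine Finset.sum_congr rfl fun i _ => ?_
    by_cases h : 0 ≤ μ i
    · have habs : |μ i| = μ i := abs_of_nonneg h
      simp only [hχ, hT, Finset.mem_filter, Finset.mem_univ, true_and, h, if_true, habs, ← hμ]
      push_cast
      ring
    · have habs : |μ i| = -μ i := abs_of_neg (lt_of_not_ge h)
      simp only [hχ, hT, Finset.mem_filter, Finset.mem_univ, true_and, h, if_false, habs, ← hμ]
      push_cast
      ring
  have step2 : U * Matrix.diagonal (fun j => 2 * χ j - 1) * Uᴴ = (P + P) - 1 := by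
    have hds : Matrix.diagonal (fun j => 2 * χ j - 1)
        = Matrix.diagonal χ + Matrix.diagonal χ - 1 := by
      ext i j
      by_cases h : i = j
      · subst h; simp [Matrix.diagonal_apply, Matrix.one_apply]; ring
      · simp [Matrix.diagonal_apply_ne _ h, Matrix.one_apply, h]
    rw [hds, hP, Matrix.mul_sub, Matrix.mul_add, Matrix.mul_one, Matrix.sub_mul,
      Matrix.add_mul, hUU']
  have e1 : ((A - B) * ((P + P) - 1)).trace = ((traceNormH hD : ℝ) : ℂ) := by
    rw [← step2]; exact step1
  have htr : ((A - B) * ((P + P) - 1)).trace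
      = (A * P).trace + (A * P).trace - A.trace
        - ((B * P).trace + (B * P).trace - B.trace) := by
    rw [Matrix.sub_mul, Matrix.trace_sub, Matrix.mul_sub, Matrix.mul_add, Matrix.mul_one,
      Matrix.trace_sub, Matrix.trace_add, Matrix.mul_sub, Matrix.mul_add, Matrix.mul_one,
      Matrix.trace_sub, Matrix.trace_add]
  have e2 := congrArg Complex.re e1
  rw [htr] at e2
  simp only [Complex.sub_re, Complex.add_re, Complex.ofReal_re] at e2
  have kA := kyfan_upper hA U hUmem T hα eA heA
  rw [← hχ, ← hP, ← hk] at kA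
  have kB := kyfan_lower hB U hUmem T hβ' eB heB
  rw [← hχ, ← hP, ← hk] at kB
  have hAre : A.trace.re = ∑ i, α i := by
    rw [trace_re_eq_sum_eigenvalues hA, ← Equiv.sum_comp eA hA.eigenvalues, heA]
    rfl
  have hBre : B.trace.re = ∑ i, β' i := by
    rw [trace_re_eq_sum_eigenvalues hB, ← Equiv.sum_comp eB hB.eigenvalues, heB]
    rfl
  have hfinal : ∑ i, (2 * (if i.val < k then α i else 0) - α i
      - (2 * (if i.val < k then β' i else 0) - β' i)) ≤ ∑ i, |α i - β' i| := by
    refine Finset.sum_le_sum fun i _ => ?_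
    by_cases h : i.val < k
    · simp only [h, if_true]
      have := le_abs_self (α i - β' i); linarith
    · simp only [h, if_false]
      have := neg_abs_le (α i - β' i); linarith
  have hsumexp : ∑ i, (2 * (if i.val < k then α i else 0) - α i
      - (2 * (if i.val < k then β' i else 0) - β' i))
      = 2 * (∑ i, if i.val < k then α i else 0) - (∑ i, α i)
        - (2 * (∑ i, if i.val < k then β' i else 0) - ∑ i, β' i) := by
    rw [Finset.sum_sub_distrib, Finset.sum_sub_distrib, Finset.sum_sub_distrib,
      ← Finset.mul_sum, ← Finset.mul_sum]
  rw [hsumexp] at hfinal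
  linarith

lemma mirsky_lower {d : ℕ} {A B : Matrix (Fin d) (Fin d) ℂ}
    (hA : A.IsHermitian) (hB : B.IsHermitian) {α β : Fin d → ℝ}
    (hα : Antitone α) (hβ : Antitone β)
    (eA : Equiv.Perm (Fin d)) (heA : α = hA.eigenvalues ∘ eA)
    (eB : Equiv.Perm (Fin d)) (heB : β = hB.eigenvalues ∘ eB) :
    (∑ i, |α i - β i|) ≤ traceNormH (hA.sub hB) := by
  classical
  set hD := hA.sub hB with hDdef
  set μ : Fin d → ℝ := hD.eigenvalues with hμ
  set U : Matrix (Fin d) (Fin d) ℂ := (hD.eigenvectorUnitary : Matrix (Fin d) (Fin d) ℂ)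
    with hUdef
  have hUmem : U ∈ Matrix.unitaryGroup (Fin d) ℂ := hD.eigenvectorUnitary.2
  set m : Fin d → ℝ := fun i => max (-μ i) 0 with hm
  set N : Matrix (Fin d) (Fin d) ℂ := U * Matrix.diagonal (fun i => (m i : ℂ)) * Uᴴ with hN
  have hNpsd : N.PosSemidef :=
    psd_unitary_conj_diag U hUmem m (fun i => le_max_right _ _)
  have hNherm : N.IsHermitian := hNpsd.1
  have hAN : (A + N).IsHermitian := hA.add hNherm
  have psd1 : ((A + N) - A).PosSemidef := by
    have : (A + N) - A = N := by abel
    rw [this]; exact hNpsd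
  have hDN : (A + N) - B = U * Matrix.diagonal (fun i => ((max (μ i) 0 : ℝ) : ℂ)) * Uᴴ := by
    have h1 : (A + N) - B = (A - B) + N := by abel
    rw [h1]
    have hfun : ∀ i, μ i + m i = max (μ i) 0 := fun i => by
      have h2m : m i = max (-μ i) 0 := rfl
      rcases le_total (μ i) 0 with h | h
      · rw [h2m, max_eq_left (by linarith : (0:ℝ) ≤ -μ i), max_eq_right h]; ring
      · rw [h2m, max_eq_right (by linarith : -μ i ≤ (0:ℝ)), max_eq_left h]; ring
    have hdiag2 : (fun i => (RCLike.ofReal ∘ hD.eigenvalues) i + ((m i : ℝ) : ℂ))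
        = fun i => ((max (μ i) 0 : ℝ) : ℂ) := by
      funext i
      rw [show (RCLike.ofReal ∘ hD.eigenvalues) i = ((μ i : ℝ) : ℂ) from rfl,
        ← Complex.ofReal_add, hfun i]
    conv_lhs => rw [hD.spectral_theorem]
    rw [Unitary.conjStarAlgAut_apply, Matrix.star_eq_conjTranspose, ← hUdef, hN, ← Matrix.add_mul, ← Matrix.mul_add,
      Matrix.diagonal_add, hdiag2]
  have psd2 : ((A + N) - B).PosSemidef := by
    rw [hDN]
    exact psd_unitary_conj_diag U hUmem _ (fun i => le_max_right _ _)
  obtain ⟨γ, eC, hγ, heC⟩ := exists_antitone_perm hAN.eigenvalues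
  have h1 : ∀ i, α i ≤ γ i := fun i => weyl_mono hA hAN psd1 hα hγ eA heA eC heC i
  have h2 : ∀ i, β i ≤ γ i := fun i => weyl_mono hB hAN psd2 hβ hγ eB heB eC heC i
  -- trace identities
  have tA : A.trace.re = ∑ i, α i := by
    rw [trace_re_eq_sum_eigenvalues hA, ← Equiv.sum_comp eA hA.eigenvalues, heA]; rfl
  have tB : B.trace.re = ∑ i, β i := by
    rw [trace_re_eq_sum_eigenvalues hB, ← Equiv.sum_comp eB hB.eigenvalues, heB]; rfl
  have tC : (A + N).trace.re = ∑ i, γ i := by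
    rw [trace_re_eq_sum_eigenvalues hAN, ← Equiv.sum_comp eC hAN.eigenvalues, heC]; rfl
  have tN : N.trace.re = ∑ i, m i := by
    rw [hN, trace_unitary_conj U hUmem]
    rw [show (∑ i, ((m i : ℝ) : ℂ)) = ((∑ i, m i : ℝ) : ℂ) by push_cast; rfl]
    exact Complex.ofReal_re _
  have tD : (A - B).trace.re = ∑ i, μ i := trace_re_eq_sum_eigenvalues hD
  have tAN : (A + N).trace.re = A.trace.re + N.trace.re := by
    rw [Matrix.trace_add, Complex.add_re]
  have tAB : (A - B).trace.re = A.trace.re - B.trace.re := by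
    rw [Matrix.trace_sub, Complex.sub_re]
  -- final computation
  have habs : traceNormH hD = ∑ i, (μ i + 2 * m i) := by
    rw [traceNormH]
    refine Finset.sum_congr rfl fun i _ => ?_
    have h2m : m i = max (-μ i) 0 := rfl
    rcases le_total (μ i) 0 with h | h
    · rw [show |hD.eigenvalues i| = -μ i from abs_of_nonpos h, h2m,
        max_eq_left (by linarith : (0:ℝ) ≤ -μ i)]
      ring
    · rw [show |hD.eigenvalues i| = μ i from _root_.abs_of_nonneg h, h2m,
        max_eq_right (by linarith : -μ i ≤ (0:ℝ))]
      ring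
  have hbound : ∑ i, |α i - β i| ≤ ∑ i, (2 * γ i - α i - β i) := by
    refine Finset.sum_le_sum fun i _ => ?_
    have ha := h1 i
    have hb := h2 i
    rcases abs_cases (α i - β i) with ⟨h', _⟩ | ⟨h', _⟩ <;> rw [h'] <;> linarith
  have hsplit : ∑ i, (2 * γ i - α i - β i) = 2 * (∑ i, γ i) - (∑ i, α i) - ∑ i, β i := by
    rw [Finset.sum_sub_distrib, Finset.sum_sub_distrib, ← Finset.mul_sum]
  have hsum2 : ∑ i, (μ i + 2 * m i) = (∑ i, μ i) + 2 * ∑ i, m i := by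
    rw [Finset.sum_add_distrib, ← Finset.mul_sum]
  rw [habs, hsum2]
  rw [hsplit] at hbound
  linarith

/-- Mirsky's inequality for the trace norm: if `α`, `β` are the eigenvalues of
Hermitian matrices `A`, `B` sorted in non-increasing order and `β'` those of `B`
sorted in non-decreasing order, then
`‖Diag α - Diag β‖₁ ≤ ‖A - B‖₁ ≤ ‖Diag α - Diag β'‖₁`.  (The trace norm of the
real diagonal matrix `Diag α - Diag β` is `∑ i, |α i - β i|`.) -/
theorem mirsky_trace_norm (d : ℕ) (A B : Matrix (Fin d) (Fin d) ℂ)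
    (hA : A.IsHermitian) (hB : B.IsHermitian)
    (α β β' : Fin d → ℝ)
    (hα : Antitone α) (hβ : Antitone β) (hβ' : Monotone β')
    (hαA : ∃ e : Equiv.Perm (Fin d), α = hA.eigenvalues ∘ e)
    (hβB : ∃ e : Equiv.Perm (Fin d), β = hB.eigenvalues ∘ e)
    (hβ'B : ∃ e : Equiv.Perm (Fin d), β' = hB.eigenvalues ∘ e) :
    (∑ i, |α i - β i|) ≤ traceNormH (hA.sub hB) ∧
      traceNormH (hA.sub hB) ≤ ∑ i, |α i - β' i| := by
  obtain ⟨eA, heA⟩ := hαA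
  obtain ⟨eB, heB⟩ := hβB
  obtain ⟨eB', heB'⟩ := hβ'B
  exact ⟨mirsky_lower hA hB hα hβ eA heA eB heB,
    mirsky_upper hA hB hα hβ' eA heA eB' heB'⟩
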